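/- Corner growth model and the g-measure: let q ∈ (0,1), let b, c be positive integers, and let (w_{ij})_{i∈[1,b], j∈[1,c]} be independent random variables each with geometric distribution P(w_{ij} = k) = (1−q)q^k for k ∈ ℕ (the product measure on ℕ^{[1,b]×[1,c]}). For 1 ≤ m ≤ b and 1 ≤ n ≤ c let G(m,n) be the maximum over monotone paths Π from (1,1) to (m,n) of ∑_{(i,j)∈Π} w_{ij}. Then for every partition λ = (λ_1 ≥ λ_2 ≥ ⋯ ≥ λ_b ≥ 0): P(G(b,c) = λ_1, G(b−1,c) = λ_2, …, G(1,c) = λ_b) = (1−q)^{bc} g_λ(q,…,q), with c arguments all equal to q. -/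

import Mathlib

open scoped BigOperators

/-- A plane partition: a matrix of naturals (0-indexed) with weakly decreasing rows and
columns and finitely many nonzero entries. -/
structure PlanePartition where
  entry : ℕ → ℕ → ℕ
  row_decr : ∀ i j, entry i (j + 1) ≤ entry i j
  col_decr : ∀ i j, entry (i + 1) j ≤ entry i j
  finite_support : {p : ℕ × ℕ | entry p.1 p.2 ≠ 0}.Finite

namespace PlanePartition

/-- `π` has at most `b` (nonzero) rows. -/
def rowsLE (π : PlanePartition) (b : ℕ) : Prop := ∀ i j, b ≤ i → π.entry i j = 0

/-- `π` has at most `a` (nonzero) columns. -/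
def colsLE (π : PlanePartition) (a : ℕ) : Prop := ∀ i j, a ≤ j → π.entry i j = 0

/-- all entries of `π` are at most `c`. -/
def entriesLE (π : PlanePartition) (c : ℕ) : Prop := ∀ i j, π.entry i j ≤ c

/-- the number of columns of `π` containing the entry `ℓ`. -/
noncomputable def cCol (π : PlanePartition) (ℓ : ℕ) : ℕ :=
  {j | ∃ i, π.entry i j = ℓ}.ncard

/-- the length of the `i`-th row of `π` (0-indexed); this is the `(i+1)`-st part of
the shape of `π`. -/
noncomputable def rowLen (π : PlanePartition) (i : ℕ) : ℕ :=
  {j | 0 < π.entry i j}.ncard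

/-- `d_{iℓ} = #{j : π_{ij} = ℓ > π_{i+1,j}}`; the row index `i` is 0-indexed
while `ℓ` denotes the actual value. -/
noncomputable def phi (π : PlanePartition) (i ℓ : ℕ) : ℕ :=
  {j | π.entry i j = ℓ ∧ π.entry (i + 1) j < ℓ}.ncard

/-- `Φ(π)` as a 0-indexed matrix: entry `(i, l)` counts `j` with `π_{ij} = l+1 > π_{i+1,j}`. -/
noncomputable def phiMatrix (π : PlanePartition) : ℕ → ℕ → ℕ :=
  fun i l => π.phi i (l + 1)

/-- `π` has shape `μ`. -/
def hasShape (π : PlanePartition) (μ : YoungDiagram) : Prop :=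
  ∀ i j, 0 < π.entry i j ↔ (i, j) ∈ μ

/-- the descent set of `π` (0-indexed positions). -/
def des (π : PlanePartition) : Set (ℕ × ℕ) :=
  {p | π.entry (p.1 + 1) p.2 < π.entry p.1 p.2}

end PlanePartition

/-- the set of plane partitions with at most `a` columns, at most `b` rows
and entries at most `c`. -/
def PP (a b c : ℕ) : Set PlanePartition :=
  {π | π.colsLE a ∧ π.rowsLE b ∧ π.entriesLE c}

/-- `PP(∞, b, c)`: plane partitions with at most `b` rows and entries at most `c`. -/
def PPinf (b c : ℕ) : Set PlanePartition :=
  {π | π.rowsLE b ∧ π.entriesLE c}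

/-- a monotone lattice path (as a list of points) from `s` to `t`. -/
def IsMonPath (L : List (ℕ × ℕ)) (s t : ℕ × ℕ) : Prop :=
  L.head? = some s ∧ L.getLast? = some t ∧
    L.Chain' fun p q => q = (p.1 + 1, p.2) ∨ q = (p.1, p.2 + 1)

/-- the last passage time: the maximal weight of a monotone path from `s` to `t`
in the matrix `d`. -/
noncomputable def lastPassage (d : ℕ → ℕ → ℕ) (s t : ℕ × ℕ) : ℕ :=
  sSup {n | ∃ L, IsMonPath L s t ∧ n = (L.map fun p => d p.1 p.2).sum}

/-- `b×c` matrices of naturals (as functions vanishing off `[0,b) × [0,c)`) whose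
last passage time `G(b,c)` is at most `a`. -/
def BM (a b c : ℕ) : Set (ℕ → ℕ → ℕ) :=
  {d | (∀ i j, b ≤ i → d i j = 0) ∧ (∀ i j, c ≤ j → d i j = 0) ∧
    lastPassage d (0, 0) (b - 1, c - 1) ≤ a}

/-- the rectangular Young diagram of the partition `(a^b)` (with `b` rows of length `a`). -/
def rectDiagram (a b : ℕ) : YoungDiagram where
  cells := Finset.range b ×ˢ Finset.range a
  isLowerSet := by
    intro p q hle hp
    simp only [Finset.coe_product, Set.mem_prod, Finset.mem_coe, Finset.mem_range] at hp ⊢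
    exact ⟨lt_of_le_of_lt hle.1 hp.1, lt_of_le_of_lt hle.2 hp.2⟩

/-- the variables `(1^b, x_1, x_2, …)`: the first `b` variables are specialized to `1`. -/
def oneExtend (b : ℕ) (x : ℕ → ℝ) : ℕ → ℝ :=
  fun i => if i < b then 1 else x (i - b)

/-- the Schur polynomial `s_μ(x_1, …, x_N)` evaluated at real arguments;
variables are 0-indexed (`x ℓ` is the variable `x_{ℓ+1}`), as are tableau entries. -/
noncomputable def schur (μ : YoungDiagram) (N : ℕ) (x : ℕ → ℝ) : ℝ :=
  ∑ᶠ T ∈ {T : SemistandardYoungTableau μ | ∀ i j, (i, j) ∈ μ → T i j < N},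
    ∏ p ∈ μ.cells, x (T p.1 p.2)

/-- the dual symmetric Grothendieck polynomial `g_μ(x_1, …, x_n)` evaluated at real
arguments; variables are 0-indexed (`x ℓ` is the variable `x_{ℓ+1}`). -/
noncomputable def grothG (μ : YoungDiagram) (n : ℕ) (x : ℕ → ℝ) : ℝ :=
  ∑ᶠ π ∈ {π : PlanePartition | π.hasShape μ ∧ π.entriesLE n},
    ∏ ℓ ∈ Finset.range n, x ℓ ^ π.cCol (ℓ + 1)

/-- the elementary symmetric polynomial `e_m(x_1, …, x_n)` evaluated at real arguments. -/
noncomputable def esym (n : ℕ) (x : ℕ → ℝ) (m : ℕ) : ℝ :=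
  ∑ S ∈ (Finset.range n).powersetCard m, ∏ i ∈ S, x i

/-- `e_m` for an integer index `m`, with `e_m = 0` for `m < 0`. -/
noncomputable def esymZ (n : ℕ) (x : ℕ → ℝ) (m : ℤ) : ℝ :=
  if 0 ≤ m then esym n x m.toNat else 0

/-- the weight `∏_{(i,j) ∈ Des(π)} q_{π_{ij}}`; the parameters are 0-indexed
(`q ℓ` is the parameter `q_{ℓ+1}`). -/
noncomputable def desWeight (π : PlanePartition) (q : ℕ → ℝ) : ℝ :=
  ∏ᶠ p ∈ π.des, q (π.entry p.1 p.2 - 1)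

/-- the probability of a configuration `w` of a `b×c` matrix of i.i.d. Geom(q) entries,
where `P(entry = k) = (1-q) qᵏ`. -/
noncomputable def geomWeight (q : ℝ) (b c : ℕ) (w : Fin b × Fin c → ℕ) : ℝ :=
  ∏ p : Fin b × Fin c, ((1 - q) * q ^ w p)

/-- extend a `b×c` matrix to an `ℕ × ℕ`-indexed matrix by zero. -/
def matExt {b c : ℕ} (w : Fin b × Fin c → ℕ) : ℕ → ℕ → ℕ :=
  fun i j => if h : i < b ∧ j < c then w (⟨i, h.1⟩, ⟨j, h.2⟩) else 0


section Paths

/-- the set of path weights -/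
def PS (d : ℕ → ℕ → ℕ) (t : ℕ × ℕ) : Set ℕ :=
  {n | ∃ L, IsMonPath L (0,0) t ∧ n = (L.map fun p => d p.1 p.2).sum}

theorem IsMonPath.ne_nil {L : List (ℕ × ℕ)} {s t : ℕ × ℕ} (h : IsMonPath L s t) :
    L ≠ [] := by
  intro e; subst e; simp [IsMonPath] at h

theorem IsMonPath.snoc {L : List (ℕ × ℕ)} {s t t' : ℕ × ℕ} (h : IsMonPath L s t)
    (h' : t' = (t.1 + 1, t.2) ∨ t' = (t.1, t.2 + 1)) : IsMonPath (L ++ [t']) s t' := by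
  obtain ⟨h1, h2, h3⟩ := h
  refine ⟨?_, ?_, ?_⟩
  · cases L with
    | nil => simp at h1
    | cons a l => simpa using h1
  · simp
  · rw [List.Chain', List.isChain_append]
    refine ⟨h3, by simp, ?_⟩
    intro x hx y hy
    simp at hy
    rw [h2] at hx
    simp at hx
    subst hx; subst hy
    rcases h' with h' | h' <;> simp [h']

theorem IsMonPath.unsnoc {L : List (ℕ × ℕ)} {s t : ℕ × ℕ} (h : IsMonPath L s t)
    (hne : s ≠ t) :
    ∃ t', IsMonPath L.dropLast s t' ∧ (t = (t'.1 + 1, t'.2) ∨ t = (t'.1, t'.2 + 1)) ∧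
      L = L.dropLast ++ [t] := by
  obtain ⟨h1, h2, h3⟩ := h
  have hL : L.dropLast ++ [t] = L := List.dropLast_append_getLast? t h2
  have hd : L.dropLast ≠ [] := by
    intro e
    rw [e] at hL
    simp at hL
    rw [← hL] at h1
    simp at h1
    exact hne (by simp [h1])
  have hgl : L.dropLast.getLast? = some (L.dropLast.getLast hd) := List.getLast?_eq_getLast hd
  refine ⟨L.dropLast.getLast hd, ⟨?_, hgl, ?_⟩, ?_, hL.symm⟩
  · rw [← hL] at h1
    rwa [List.head?_append_of_ne_nil _ hd] at h1
  · rw [← hL] at h3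
    exact (List.isChain_append.mp h3).1
  · rw [← hL] at h3
    have := (List.isChain_append.mp h3).2.2
    have := this _ hgl t (by simp)
    tauto

theorem monPath_facts {L : List (ℕ × ℕ)} {s t : ℕ × ℕ} (h : IsMonPath L s t) :
    L.length + s.1 + s.2 = t.1 + t.2 + 1 ∧ ∀ p ∈ L, p.1 ≤ t.1 ∧ p.2 ≤ t.2 := by
  induction L using List.reverseRecOn generalizing s t with
  | nil => exact absurd rfl h.ne_nil
  | append_singleton L a ih =>
    obtain ⟨h1, h2, h3⟩ := h
    have hta : a = t := by simpa using h2
    subst hta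
    rcases eq_or_ne L [] with rfl | hL
    · have hsa : a = s := by simpa using h1
      obtain rfl := hsa
      refine ⟨by simp only [List.nil_append, List.length_singleton]; omega, ?_⟩
      intro p hp
      simp at hp
      subst hp
      exact ⟨le_refl _, le_refl _⟩
    · have hgl : L.getLast? = some (L.getLast hL) := List.getLast?_eq_getLast hL
      have hc := List.isChain_append.mp h3
      have hR := hc.2.2 _ hgl a (by simp)
      have hpath : IsMonPath L s (L.getLast hL) := by
        refine ⟨?_, hgl, hc.1⟩
        rwa [List.head?_append_of_ne_nil _ hL] at h1
      obtain ⟨hlen, hmem⟩ := ih hpath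
      have hlen2 : (L ++ [a]).length = L.length + 1 := by simp
      have hRe : a.1 = (L.getLast hL).1 + 1 ∧ a.2 = (L.getLast hL).2 ∨
          a.1 = (L.getLast hL).1 ∧ a.2 = (L.getLast hL).2 + 1 := by
        rcases hR with hR | hR <;> [left; right] <;>
          exact ⟨by rw [hR], by rw [hR]⟩
      constructor
      · omega
      · intro p hp
        simp at hp
        rcases hp with hp | hp
        · have := hmem p hp
          omega
        · subst hp
          omega

theorem monPath_self {L : List (ℕ × ℕ)} {s : ℕ × ℕ} (h : IsMonPath L s s) : L = [s] := by
  have := (monPath_facts h).1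
  have hlen : L.length = 1 := by omega
  obtain ⟨a, rfl⟩ := List.length_eq_one_iff.mp hlen
  have h1 := h.1
  simp at h1
  rw [h1]

theorem monPath_exists : ∀ x y : ℕ, ∃ L, IsMonPath L (0,0) (x, y) := by
  have base : ∀ y, ∃ L, IsMonPath L (0,0) (0, y) := by
    intro y
    induction y with
    | zero => exact ⟨[(0,0)], by simp [IsMonPath, List.Chain']⟩
    | succ y ih =>
      obtain ⟨L, hL⟩ := ih
      exact ⟨L ++ [(0, y+1)], hL.snoc (Or.inr rfl)⟩
  intro x
  induction x with
  | zero => exact base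
  | succ x ih =>
    intro y
    obtain ⟨L, hL⟩ := ih y
    exact ⟨L ++ [(x+1, y)], hL.snoc (Or.inl rfl)⟩

theorem PS_nonempty (d : ℕ → ℕ → ℕ) (t : ℕ × ℕ) : (PS d t).Nonempty := by
  obtain ⟨L, hL⟩ := monPath_exists t.1 t.2
  exact ⟨_, L, by simpa using hL, rfl⟩

theorem PS_bddAbove (d : ℕ → ℕ → ℕ) (t : ℕ × ℕ) : BddAbove (PS d t) := by
  classical
  refine ⟨(t.1 + t.2 + 1) * ((Finset.range (t.1+1) ×ˢ Finset.range (t.2+1)).sup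
    fun p => d p.1 p.2), ?_⟩
  rintro n ⟨L, hL, rfl⟩
  obtain ⟨hlen, hmem⟩ := monPath_facts hL
  simp only [Prod.fst, Prod.snd] at hlen
  have hlen' : L.length = t.1 + t.2 + 1 := by omega
  have := List.sum_le_card_nsmul (L.map fun p => d p.1 p.2)
    ((Finset.range (t.1+1) ×ˢ Finset.range (t.2+1)).sup fun p => d p.1 p.2) ?_
  · simpa [hlen', mul_comm] using this
  · intro x hx
    simp only [List.mem_map] at hx
    obtain ⟨p, hp, rfl⟩ := hx
    obtain ⟨hp1, hp2⟩ := hmem p hp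
    exact Finset.le_sup (f := fun p : ℕ × ℕ => d p.1 p.2)
      (by simp [Finset.mem_product, Nat.lt_succ_iff, hp1, hp2])

theorem lp_mem (d : ℕ → ℕ → ℕ) (t : ℕ × ℕ) : lastPassage d (0,0) t ∈ PS d t :=
  Nat.sSup_mem (PS_nonempty d t) (PS_bddAbove d t)

theorem le_lp {d : ℕ → ℕ → ℕ} {t : ℕ × ℕ} {n : ℕ} (h : n ∈ PS d t) :
    n ≤ lastPassage d (0,0) t := le_csSup (PS_bddAbove d t) h

theorem lp_zero (d : ℕ → ℕ → ℕ) : lastPassage d (0,0) (0,0) = d 0 0 := by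
  have h1 : d 0 0 ∈ PS d (0,0) := ⟨[(0,0)], by simp [IsMonPath, List.Chain']⟩
  have h2 := lp_mem d (0,0)
  obtain ⟨L, hL, hsum⟩ := h2
  rw [monPath_self hL] at hsum
  simp only [List.map_cons, List.map_nil, List.sum_cons, List.sum_nil, add_zero] at hsum
  exact le_antisymm (le_of_eq hsum) (le_lp h1)

theorem PS_step {d : ℕ → ℕ → ℕ} {t t' : ℕ × ℕ}
    (h' : t = (t'.1 + 1, t'.2) ∨ t = (t'.1, t'.2 + 1)) :
    ∀ {k}, k ∈ PS d t' → k + d t.1 t.2 ∈ PS d t := by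
  rintro k ⟨L, hL, rfl⟩
  exact ⟨L ++ [t], hL.snoc h', by simp⟩

theorem PS_destruct {d : ℕ → ℕ → ℕ} {t : ℕ × ℕ} {n : ℕ} (hne : t ≠ (0,0)) (h : n ∈ PS d t) :
    ∃ t' k, (t = (t'.1 + 1, t'.2) ∨ t = (t'.1, t'.2 + 1)) ∧ k ∈ PS d t' ∧
      n = k + d t.1 t.2 := by
  obtain ⟨L, hL, rfl⟩ := h
  obtain ⟨t', hL', hstep, hLeq⟩ := hL.unsnoc (fun e => hne e.symm)
  refine ⟨t', _, hstep, ⟨L.dropLast, hL', rfl⟩, ?_⟩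
  rw [hLeq]
  simp

theorem lp_succ_succ (d : ℕ → ℕ → ℕ) (x y : ℕ) :
    lastPassage d (0,0) (x+1, y+1)
      = max (lastPassage d (0,0) (x, y+1)) (lastPassage d (0,0) (x+1, y)) + d (x+1) (y+1) := by
  apply le_antisymm
  · apply csSup_le (PS_nonempty d _)
    intro n hn
    obtain ⟨t', k, hstep, hk, rfl⟩ := PS_destruct (by simp) hn
    rcases hstep with h | h
    · have e := Prod.ext_iff.mp h
      simp only [Prod.fst, Prod.snd] at e
      have ht' : t' = (x, y+1) := Prod.ext_iff.mpr ⟨by omega, by omega⟩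
      rw [ht'] at hk
      exact Nat.add_le_add_right (le_trans (le_lp hk) (le_max_left _ _)) _
    · have e := Prod.ext_iff.mp h
      simp only [Prod.fst, Prod.snd] at e
      have ht' : t' = (x+1, y) := Prod.ext_iff.mpr ⟨by omega, by omega⟩
      rw [ht'] at hk
      exact Nat.add_le_add_right (le_trans (le_lp hk) (le_max_right _ _)) _
  · rw [← Nat.add_max_add_right]
    apply max_le
    · exact le_lp (PS_step (t' := (x, y+1)) (Or.inl rfl) (lp_mem d (x, y+1)))
    · exact le_lp (PS_step (t' := (x+1, y)) (Or.inr rfl) (lp_mem d (x+1, y)))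

theorem lp_succ_zero (d : ℕ → ℕ → ℕ) (x : ℕ) :
    lastPassage d (0,0) (x+1, 0) = lastPassage d (0,0) (x, 0) + d (x+1) 0 := by
  apply le_antisymm
  · apply csSup_le (PS_nonempty d _)
    intro n hn
    obtain ⟨t', k, hstep, hk, rfl⟩ := PS_destruct (by simp) hn
    rcases hstep with h | h
    · have e := Prod.ext_iff.mp h
      simp only [Prod.fst, Prod.snd] at e
      have ht' : t' = (x, 0) := Prod.ext_iff.mpr ⟨by omega, by omega⟩
      rw [ht'] at hk
      exact Nat.add_le_add_right (le_lp hk) _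
    · have e := Prod.ext_iff.mp h
      simp only [Prod.fst, Prod.snd] at e
      omega
  · exact le_lp (PS_step (t' := (x, 0)) (Or.inl rfl) (lp_mem d (x, 0)))

theorem lp_zero_succ (d : ℕ → ℕ → ℕ) (y : ℕ) :
    lastPassage d (0,0) (0, y+1) = lastPassage d (0,0) (0, y) + d 0 (y+1) := by
  apply le_antisymm
  · apply csSup_le (PS_nonempty d _)
    intro n hn
    obtain ⟨t', k, hstep, hk, rfl⟩ := PS_destruct (by simp) hn
    rcases hstep with h | h
    · have e := Prod.ext_iff.mp h
      simp only [Prod.fst, Prod.snd] at e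
      omega
    · have e := Prod.ext_iff.mp h
      simp only [Prod.fst, Prod.snd] at e
      have ht' : t' = (0, y) := Prod.ext_iff.mpr ⟨by omega, by omega⟩
      rw [ht'] at hk
      exact Nat.add_le_add_right (le_lp hk) _
  · exact le_lp (PS_step (t' := (0, y)) (Or.inr rfl) (lp_mem d (0, y)))

/-- `gf d m n = G(m, n)`, the last passage time to the `m × n` corner (1-indexed sizes),
with `gf d 0 n = gf d m 0 = 0`. -/
noncomputable def gf (d : ℕ → ℕ → ℕ) (m n : ℕ) : ℕ :=
  if m = 0 ∨ n = 0 then 0 else lastPassage d (0,0) (m - 1, n - 1)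

@[simp] theorem gf_zero_left (d : ℕ → ℕ → ℕ) (n : ℕ) : gf d 0 n = 0 := by simp [gf]
@[simp] theorem gf_zero_right (d : ℕ → ℕ → ℕ) (m : ℕ) : gf d m 0 = 0 := by simp [gf]

theorem gf_succ_succ (d : ℕ → ℕ → ℕ) (m n : ℕ) : gf d (m+1) (n+1) = lastPassage d (0,0) (m, n) := by
  simp [gf]

theorem gf_rec (d : ℕ → ℕ → ℕ) (m n : ℕ) :
    gf d (m+1) (n+1) = max (gf d m (n+1)) (gf d (m+1) n) + d m n := by
  match m, n with
  | 0, 0 => rw [gf_succ_succ, lp_zero]; simp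
  | 0, n+1 => rw [gf_succ_succ, lp_zero_succ, ← gf_succ_succ]; simp
  | m+1, 0 => rw [gf_succ_succ, lp_succ_zero, ← gf_succ_succ]; simp
  | m+1, n+1 =>
    rw [gf_succ_succ, lp_succ_succ, ← gf_succ_succ d m (n+1), ← gf_succ_succ d (m+1) n]

theorem gf_mono_left (d : ℕ → ℕ → ℕ) {m m' : ℕ} (h : m ≤ m') (n : ℕ) :
    gf d m n ≤ gf d m' n := by
  have step : ∀ k, gf d k n ≤ gf d (k+1) n := by
    intro k
    cases n with
    | zero => simp
    | succ n =>
      cases k with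
      | zero => simp
      | succ k =>
        rw [gf_rec d (k+1) n]
        exact le_trans (le_max_left _ _) (Nat.le_add_right _ _)
  exact monotone_nat_of_le_succ step h

theorem gf_mono_right (d : ℕ → ℕ → ℕ) (m : ℕ) {n n' : ℕ} (h : n ≤ n') :
    gf d m n ≤ gf d m n' := by
  have step : ∀ k, gf d m k ≤ gf d m (k+1) := by
    intro k
    cases m with
    | zero => simp
    | succ m =>
      cases k with
      | zero => simp
      | succ k =>
        rw [gf_rec d m (k+1)]
        exact le_trans (le_max_right _ _) (Nat.le_add_right _ _)
  exact monotone_nat_of_le_succ step h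

theorem gf_unique {d : ℕ → ℕ → ℕ} {G : ℕ → ℕ → ℕ} {b c : ℕ}
    (h0 : ∀ n, n ≤ c → G 0 n = 0) (h0' : ∀ m, m ≤ b → G m 0 = 0)
    (hrec : ∀ m, m < b → ∀ n, n < c →
      G (m+1) (n+1) = max (G m (n+1)) (G (m+1) n) + d m n) :
    ∀ m, m ≤ b → ∀ n, n ≤ c → gf d m n = G m n := by
  intro m
  induction m with
  | zero => intro _ n hn; rw [h0 n hn]; simp
  | succ m ihm =>
    intro hm n
    induction n with
    | zero => intro _; rw [h0' (m+1) hm]; simp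
    | succ n ihn =>
      intro hn
      rw [gf_rec, hrec m (by omega) n (by omega), ihm (by omega) (n+1) hn,
        ihn (by omega)]

theorem PlanePartition.ext' {π π' : PlanePartition} (h : π.entry = π'.entry) : π = π' := by
  cases π; cases π'; simpa using h

theorem downset_eq_Iio {S : Set ℕ} (hfin : S.Finite)
    (hdown : ∀ j' j, j' ≤ j → j ∈ S → j' ∈ S) : S = Set.Iio S.ncard := by
  rcases S.eq_empty_or_nonempty with rfl | hne
  · rw [Set.ncard_empty]
    ext j
    simp
  · have hFne : hfin.toFinset.Nonempty := by
      rwa [Set.Finite.toFinset_nonempty]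
    set M := hfin.toFinset.max' hFne with hM
    have hMS : M ∈ S := by
      have := hfin.toFinset.max'_mem hFne
      rwa [Set.Finite.mem_toFinset] at this
    have hIic : S = Set.Iic M := by
      apply Set.eq_of_subset_of_subset
      · intro j hj
        exact hfin.toFinset.le_max' j (by rwa [Set.Finite.mem_toFinset])
      · intro j hj
        exact hdown j M hj hMS
    rw [hIic, ← Finset.coe_Iic, Set.ncard_coe_finset, Nat.card_Iic]
    ext j
    simp [Nat.lt_succ_iff]

theorem PlanePartition.row_antitone (π : PlanePartition) (i : ℕ) :
    Antitone (fun j => π.entry i j) := antitone_nat_of_succ_le (π.row_decr i)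

theorem PlanePartition.row_support_finite (π : PlanePartition) (i : ℕ) :
    {j | π.entry i j ≠ 0}.Finite := by
  have h : {j | π.entry i j ≠ 0} = (fun j => ((i, j) : ℕ × ℕ)) ⁻¹' {p | π.entry p.1 p.2 ≠ 0} := by
    ext j; simp
  rw [h]
  exact Set.Finite.preimage (Set.injOn_of_injective (fun a b hab => by simpa using hab))
    π.finite_support

theorem PlanePartition.row_level_finite (π : PlanePartition) (i t : ℕ) (ht : 0 < t) :
    {j | t ≤ π.entry i j}.Finite :=
  (π.row_support_finite i).subset (fun j hj => by simp only [Set.mem_setOf_eq] at hj ⊢; omega)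

theorem PlanePartition.row_level_eq (π : PlanePartition) (i t : ℕ) (ht : 0 < t) :
    {j | t ≤ π.entry i j} = Set.Iio ({j | t ≤ π.entry i j}.ncard) :=
  downset_eq_Iio (π.row_level_finite i t ht)
    (fun j' j hle hj => le_trans hj (π.row_antitone i hle))

theorem PlanePartition.row_level_mem (π : PlanePartition) (i t j : ℕ) (ht : 0 < t) :
    j < ({j | t ≤ π.entry i j}.ncard) ↔ t ≤ π.entry i j := by
  constructor
  · intro hj
    have := (π.row_level_eq i t ht).symm ▸ (Set.mem_Iio.mpr hj)
    exact this
  · intro hj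
    have : j ∈ {j | t ≤ π.entry i j} := hj
    rw [π.row_level_eq i t ht] at this
    exact this

theorem count_Icc_aux (c e : ℕ) (he : e ≤ c) :
    ((Finset.Icc 1 c).filter (fun n => c + 1 - n ≤ e)).card = e := by
  have h : (Finset.Icc 1 c).filter (fun n => c + 1 - n ≤ e) = Finset.Icc (c + 1 - e) c := by
    ext n
    simp only [Finset.mem_filter, Finset.mem_Icc]
    omega
  rw [h, Nat.card_Icc]
  omega

/-- entry `(i, j)` of the plane partition associated to the matrix `d` (with parameters
`b`, `c`): the number of `n ∈ [1, c]` with `j < G(b - i, n)`. -/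
noncomputable def fEntry (b c : ℕ) (d : ℕ → ℕ → ℕ) (i j : ℕ) : ℕ :=
  ((Finset.Icc 1 c).filter fun n => j < gf d (b - i) n).card

theorem fEntry_le (b c : ℕ) (d : ℕ → ℕ → ℕ) (i j : ℕ) : fEntry b c d i j ≤ c := by
  calc ((Finset.Icc 1 c).filter fun n => j < gf d (b - i) n).card
      ≤ (Finset.Icc 1 c).card := Finset.card_filter_le _ _
    _ = c := by rw [Nat.card_Icc]; omega

theorem fEntry_ge_iff (b c : ℕ) (d : ℕ → ℕ → ℕ) (i j t : ℕ) (ht : 0 < t) (htc : t ≤ c) :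
    t ≤ fEntry b c d i j ↔ j < gf d (b - i) (c + 1 - t) := by
  constructor
  · intro h
    by_contra hlt
    push_neg at hlt
    have hsub : (Finset.Icc 1 c).filter (fun n => j < gf d (b - i) n)
        ⊆ Finset.Icc (c + 2 - t) c := by
      intro n hn
      simp only [Finset.mem_filter, Finset.mem_Icc] at hn
      simp only [Finset.mem_Icc]
      refine ⟨?_, hn.1.2⟩
      by_contra hn2
      push_neg at hn2
      have : gf d (b - i) n ≤ gf d (b - i) (c + 1 - t) :=
        gf_mono_right d _ (by omega)
      omega
    have := Finset.card_le_card hsub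
    rw [Nat.card_Icc] at this
    unfold fEntry at h
    omega
  · intro h
    have hsub : Finset.Icc (c + 1 - t) c
        ⊆ (Finset.Icc 1 c).filter (fun n => j < gf d (b - i) n) := by
      intro n hn
      simp only [Finset.mem_Icc] at hn
      simp only [Finset.mem_filter, Finset.mem_Icc]
      refine ⟨⟨by omega, hn.2⟩, ?_⟩
      exact lt_of_lt_of_le h (gf_mono_right d _ (by omega))
    have := Finset.card_le_card hsub
    rw [Nat.card_Icc] at this
    unfold fEntry
    omega

/-- the plane partition associated to a matrix. -/
noncomputable def PPofW (b c : ℕ) (d : ℕ → ℕ → ℕ) : PlanePartition where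
  entry := fEntry b c d
  row_decr := by
    intro i j
    apply Finset.card_le_card
    intro n hn
    simp only [Finset.mem_filter] at hn ⊢
    exact ⟨hn.1, by omega⟩
  col_decr := by
    intro i j
    apply Finset.card_le_card
    intro n hn
    simp only [Finset.mem_filter] at hn ⊢
    refine ⟨hn.1, lt_of_lt_of_le hn.2 (gf_mono_left d (by omega) n)⟩
  finite_support := by
    apply Set.Finite.subset (Finset.finite_toSet (Finset.range b ×ˢ Finset.range (gf d b c)))
    intro p hp
    simp only [Set.mem_setOf_eq] at hp
    have hne : ((Finset.Icc 1 c).filter fun n => p.2 < gf d (b - p.1) n).Nonempty := by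
      rw [Finset.nonempty_iff_ne_empty]
      intro he
      apply hp
      unfold fEntry
      rw [he]
      simp
    obtain ⟨n, hn⟩ := hne
    simp only [Finset.mem_filter, Finset.mem_Icc] at hn
    have hib : p.1 < b := by
      by_contra hbi
      push_neg at hbi
      have : b - p.1 = 0 := by omega
      rw [this] at hn
      simp at hn
    have : p.2 < gf d b c :=
      lt_of_lt_of_le hn.2 (le_trans (gf_mono_left d (by omega) n) (gf_mono_right d b hn.1.2))
    simp only [Finset.coe_product, Set.mem_prod, Finset.mem_coe, Finset.mem_range]
    exact ⟨hib, this⟩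

theorem PPofW_entry (b c : ℕ) (d : ℕ → ℕ → ℕ) (i j : ℕ) :
    (PPofW b c d).entry i j = fEntry b c d i j := rfl

theorem PPofW_entriesLE (b c : ℕ) (d : ℕ → ℕ → ℕ) : (PPofW b c d).entriesLE c :=
  fun i j => fEntry_le b c d i j

/-- characterization of `fEntry = ℓ` for `1 ≤ ℓ ≤ c`. -/
theorem fEntry_eq_iff (b c : ℕ) (d : ℕ → ℕ → ℕ) (i j ℓ : ℕ) (hl : 0 < ℓ) (hlc : ℓ ≤ c) :
    fEntry b c d i j = ℓ ↔
      gf d (b - i) (c - ℓ) ≤ j ∧ j < gf d (b - i) (c + 1 - ℓ) := by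
  have h1 := fEntry_ge_iff b c d i j ℓ hl hlc
  constructor
  · intro h
    refine ⟨?_, h1.mp (by omega)⟩
    rcases Nat.eq_or_lt_of_le hlc with rfl | hlt
    · simp
    · have h2 := fEntry_ge_iff b c d i j (ℓ+1) (by omega) (by omega)
      have : ¬ (ℓ + 1 ≤ fEntry b c d i j) := by omega
      rw [h2] at this
      push_neg at this
      have he : c + 1 - (ℓ + 1) = c - ℓ := by omega
      rwa [he] at this
  · rintro ⟨h2, h3⟩
    have hge : ℓ ≤ fEntry b c d i j := h1.mpr h3
    rcases Nat.eq_or_lt_of_le hlc with rfl | hlt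
    · have := fEntry_le b ℓ d i j
      omega
    · have h4 := fEntry_ge_iff b c d i j (ℓ+1) (by omega) (by omega)
      have he : c + 1 - (ℓ + 1) = c - ℓ := by omega
      rw [he] at h4
      have : ¬ (ℓ + 1 ≤ fEntry b c d i j) := by
        rw [h4]
        omega
      omega

theorem ncard_setOf_lt (K : ℕ) : {j : ℕ | j < K}.ncard = K := by
  rw [show {j : ℕ | j < K} = ↑(Finset.range K) by ext; simp, Set.ncard_coe_finset,
    Finset.card_range]

theorem fEntry_zero_of_le (b c : ℕ) (d : ℕ → ℕ → ℕ) {i : ℕ} (j : ℕ) (hi : b ≤ i) :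
    fEntry b c d i j = 0 := by
  unfold fEntry
  rw [show b - i = 0 by omega]
  rw [Finset.card_eq_zero, Finset.filter_eq_empty_iff]
  intro n _
  simp

/-- the candidate last-passage matrix built from a plane partition. -/
noncomputable def Gp (b c : ℕ) (π : PlanePartition) (m n : ℕ) : ℕ :=
  {j | c + 1 - n ≤ π.entry (b - m) j}.ncard

section Gp

variable {b c : ℕ} {π : PlanePartition}
  (hent : π.entriesLE c) (hrow : ∀ j, π.entry b j = 0)

theorem Gp_zero_left (hrow : ∀ j, π.entry b j = 0) {n : ℕ} (hn : n ≤ c) :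
    Gp b c π 0 n = 0 := by
  unfold Gp
  rw [show {j | c + 1 - n ≤ π.entry (b - 0) j} = ∅ from ?_, Set.ncard_empty]
  ext j
  simp only [Set.mem_setOf_eq, Set.mem_empty_iff_false, iff_false, not_le]
  rw [show b - 0 = b by omega, hrow j]
  omega

theorem Gp_zero_right (hent : π.entriesLE c) (m : ℕ) : Gp b c π m 0 = 0 := by
  unfold Gp
  rw [show {j | c + 1 - 0 ≤ π.entry (b - m) j} = ∅ from ?_, Set.ncard_empty]
  ext j
  simp only [Set.mem_setOf_eq, Set.mem_empty_iff_false, iff_false, not_le]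
  have := hent (b - m) j
  omega

theorem Gp_mono_right {m n : ℕ} (hn : n < c) : Gp b c π m n ≤ Gp b c π m (n + 1) := by
  apply Set.ncard_le_ncard
  · intro j hj
    simp only [Set.mem_setOf_eq] at hj ⊢
    omega
  · exact π.row_level_finite _ _ (by omega)

theorem Gp_mono_left {m n : ℕ} (hm : m < b) (hn : n ≤ c) :
    Gp b c π m n ≤ Gp b c π (m + 1) n := by
  apply Set.ncard_le_ncard
  · intro j hj
    simp only [Set.mem_setOf_eq] at hj ⊢
    have hcol : π.entry (b - m) j ≤ π.entry (b - (m+1)) j := by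
      have := π.col_decr (b - (m+1)) j
      rw [show b - (m+1) + 1 = b - m by omega] at this
      exact this
    omega
  · exact π.row_level_finite _ _ (by omega)

end Gp

/-- the matrix associated to a plane partition. -/
noncomputable def wOf (b c : ℕ) (π : PlanePartition) : Fin b × Fin c → ℕ :=
  fun p => Gp b c π (p.1 + 1) (p.2 + 1) - max (Gp b c π p.1 (p.2 + 1)) (Gp b c π (p.1 + 1) p.2)

theorem gf_eq_Gp {b c : ℕ} {π : PlanePartition}
    (hent : π.entriesLE c) (hrow : ∀ j, π.entry b j = 0) :
    ∀ m, m ≤ b → ∀ n, n ≤ c → gf (matExt (wOf b c π)) m n = Gp b c π m n := by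
  apply gf_unique
  · intro n hn; exact Gp_zero_left hrow hn
  · intro m _; exact Gp_zero_right hent m
  · intro m hm n hn
    have hle : max (Gp b c π m (n+1)) (Gp b c π (m+1) n) ≤ Gp b c π (m+1) (n+1) := by
      apply max_le
      · exact Gp_mono_left hm (by omega)
      · exact Gp_mono_right (by omega)
    have hmat : matExt (wOf b c π) m n = wOf b c π (⟨m, hm⟩, ⟨n, hn⟩) := by
      unfold matExt
      rw [dif_pos ⟨hm, hn⟩]
    rw [hmat]
    unfold wOf
    simp only []
    omega

/-- first round-trip: the plane partition of the matrix of `π` is `π` itself. -/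
theorem PPofW_wOf {b c : ℕ} {π : PlanePartition} {μ : YoungDiagram} (hμ : μ.colLen 0 ≤ b)
    (hsh : π.hasShape μ) (hent : π.entriesLE c) :
    PPofW b c (matExt (wOf b c π)) = π := by
  have hrow : ∀ j, π.entry b j = 0 := by
    intro j
    by_contra h
    have hmem := (hsh b j).mp (by omega)
    have := μ.up_left_mem (le_refl b) (Nat.zero_le j) hmem
    rw [YoungDiagram.mem_iff_lt_colLen] at this
    omega
  apply PlanePartition.ext'
  funext i j
  rw [PPofW_entry]
  rcases lt_or_ge i b with hib | hib
  · -- use the count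
    have hrowzero : ∀ i' j', b ≤ i' → π.entry i' j' = 0 := by
      intro i' j' hi'
      by_contra h
      have hmem := (hsh i' j').mp (by omega)
      have := μ.up_left_mem (le_refl i') (Nat.zero_le j') hmem
      rw [YoungDiagram.mem_iff_lt_colLen] at this
      omega
    unfold fEntry
    have hc : ∀ n ∈ Finset.Icc 1 c,
        (j < gf (matExt (wOf b c π)) (b - i) n) = (c + 1 - n ≤ π.entry i j) := by
      intro n hn
      simp only [Finset.mem_Icc] at hn
      rw [gf_eq_Gp hent hrow (b - i) (by omega) n hn.2]
      unfold Gp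
      rw [show b - (b - i) = i by omega]
      rw [eq_iff_iff]
      exact π.row_level_mem i (c + 1 - n) j (by omega)
    rw [Finset.filter_congr (fun n hn => by rw [hc n hn])]
    exact count_Icc_aux c _ (hent i j)
  · rw [fEntry_zero_of_le b c _ j hib]
    by_contra h
    have hmem := (hsh i j).mp (by omega)
    have := μ.up_left_mem (le_refl i) (Nat.zero_le j) hmem
    rw [YoungDiagram.mem_iff_lt_colLen] at this
    omega

/-- `Gp` of `PPofW` recovers `gf`. -/
theorem Gp_PPofW {b c : ℕ} (d : ℕ → ℕ → ℕ) :
    ∀ m, m ≤ b → ∀ n, n ≤ c → Gp b c (PPofW b c d) m n = gf d m n := by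
  intro m hm n hn
  unfold Gp
  rcases Nat.eq_zero_or_pos m with rfl | hm0
  · rw [show b - 0 = b by omega]
    rw [show {j | c + 1 - n ≤ (PPofW b c d).entry b j} = ∅ from ?_, Set.ncard_empty]
    · simp
    · ext j
      simp only [Set.mem_setOf_eq, Set.mem_empty_iff_false, iff_false, not_le]
      rw [PPofW_entry, fEntry_zero_of_le b c d j (le_refl b)]
      omega
  rcases Nat.eq_zero_or_pos n with rfl | hn0
  · rw [show {j | c + 1 - 0 ≤ (PPofW b c d).entry (b - m) j} = ∅ from ?_, Set.ncard_empty]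
    · simp
    · ext j
      simp only [Set.mem_setOf_eq, Set.mem_empty_iff_false, iff_false, not_le]
      have := fEntry_le b c d (b - m) j
      rw [PPofW_entry]
      omega
  · have hkey : {j | c + 1 - n ≤ (PPofW b c d).entry (b - m) j} = {j | j < gf d m n} := by
      ext j
      simp only [Set.mem_setOf_eq, PPofW_entry]
      rw [fEntry_ge_iff b c d (b - m) j (c + 1 - n) (by omega) (by omega)]
      rw [show b - (b - m) = m by omega, show c + 1 - (c + 1 - n) = n by omega]
    rw [hkey, ncard_setOf_lt]

/-- second round-trip: the matrix of the plane partition of `w` is `w` itself. -/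
theorem wOf_PPofW {b c : ℕ} (w : Fin b × Fin c → ℕ) :
    wOf b c (PPofW b c (matExt w)) = w := by
  funext p
  unfold wOf
  rw [Gp_PPofW (matExt w) (p.1 + 1) (by omega) (p.2 + 1) (by omega),
    Gp_PPofW (matExt w) p.1 (by omega) (p.2 + 1) (by omega),
    Gp_PPofW (matExt w) (p.1 + 1) (by omega) p.2 (by omega)]
  rw [gf_rec]
  have : matExt w (↑p.1) (↑p.2) = w p := by
    unfold matExt
    rw [dif_pos ⟨p.1.isLt, p.2.isLt⟩]
  omega

/-- the conditioning event. -/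
def condA (b c : ℕ) (μ : YoungDiagram) (w : Fin b × Fin c → ℕ) : Prop :=
  ∀ k : Fin b,
    lastPassage (matExt w) (0, 0) (b - 1 - (k : ℕ), c - 1) = μ.rowLen k

theorem gf_eq_lastPassage {b c : ℕ} (d : ℕ → ℕ → ℕ) {k : ℕ} (hk : k < b) (hc : 0 < c) :
    gf d (b - k) c = lastPassage d (0, 0) (b - 1 - k, c - 1) := by
  unfold gf
  rw [if_neg (by omega)]
  rw [show b - k - 1 = b - 1 - k by omega]

theorem notMem_of_ge {μ : YoungDiagram} {b i j : ℕ} (hμ : μ.colLen 0 ≤ b) (hib : b ≤ i) :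
    (i, j) ∉ μ := by
  intro hmem
  have := μ.up_left_mem (le_refl i) (Nat.zero_le j) hmem
  rw [YoungDiagram.mem_iff_lt_colLen] at this
  omega

theorem PPofW_hasShape {b c : ℕ} {μ : YoungDiagram} (hμ : μ.colLen 0 ≤ b)
    (hb : 0 < b) (hc : 0 < c) {w : Fin b × Fin c → ℕ} (hw : condA b c μ w) :
    (PPofW b c (matExt w)).hasShape μ := by
  intro i j
  rw [PPofW_entry]
  rcases lt_or_ge i b with hib | hib
  · have h1 : 0 < fEntry b c (matExt w) i j ↔ j < gf (matExt w) (b - i) c := by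
      have := fEntry_ge_iff b c (matExt w) i j 1 (by omega) hc
      rw [show c + 1 - 1 = c by omega] at this
      constructor
      · intro h; exact this.mp (by omega)
      · intro h; have := this.mpr h; omega
    rw [h1, gf_eq_lastPassage (matExt w) hib hc, hw ⟨i, hib⟩]
    exact (YoungDiagram.mem_iff_lt_rowLen).symm
  · rw [fEntry_zero_of_le b c _ j hib]
    simp only [lt_self_iff_false, false_iff]
    exact notMem_of_ge hμ hib

theorem wOf_condA {b c : ℕ} {μ : YoungDiagram} (hμ : μ.colLen 0 ≤ b)
    (hb : 0 < b) (hc : 0 < c) {π : PlanePartition}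
    (hsh : π.hasShape μ) (hent : π.entriesLE c) :
    condA b c μ (wOf b c π) := by
  have hrow : ∀ j, π.entry b j = 0 := by
    intro j
    by_contra h
    exact notMem_of_ge hμ (le_refl b) ((hsh b j).mp (by omega))
  intro k
  rw [← gf_eq_lastPassage (matExt (wOf b c π)) k.isLt hc]
  rw [gf_eq_Gp hent hrow (b - k) (by omega) c (le_refl c)]
  unfold Gp
  rw [show b - (b - (k : ℕ)) = (k : ℕ) by have := k.isLt; omega]
  have hset : {j | c + 1 - c ≤ π.entry (k : ℕ) j} = {j | j < μ.rowLen (k : ℕ)} := by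
    ext j
    simp only [Set.mem_setOf_eq]
    rw [show c + 1 - c = 1 by omega]
    rw [← YoungDiagram.mem_iff_lt_rowLen, ← hsh]
    omega
  rw [hset, ncard_setOf_lt]

theorem cCol_PPofW {b c : ℕ} (d : ℕ → ℕ → ℕ) {ℓ : ℕ} (hl : ℓ < c) :
    (PPofW b c d).cCol (ℓ + 1) =
      ((Finset.Icc 1 b).biUnion
        (fun m => Finset.Ico (gf d m (c - ℓ - 1)) (gf d m (c - ℓ)))).card := by
  unfold PlanePartition.cCol
  rw [← Set.ncard_coe_finset]
  congr 1
  ext j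
  simp only [Set.mem_setOf_eq, Finset.coe_biUnion, Set.mem_iUnion, Finset.mem_coe,
    Finset.mem_Ico, Finset.mem_Icc, PPofW_entry]
  constructor
  · rintro ⟨i, hi⟩
    rw [fEntry_eq_iff b c d i j (ℓ+1) (by omega) (by omega)] at hi
    rcases lt_or_ge i b with hib | hib
    · refine ⟨b - i, ⟨by omega, by omega⟩, ?_, ?_⟩
      · rw [show c - ℓ - 1 = c - (ℓ + 1) by omega]; exact hi.1
      · rw [show c - ℓ = c + 1 - (ℓ + 1) by omega]; exact hi.2
    · exfalso
      rw [show b - i = 0 by omega] at hi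
      simp at hi
  · rintro ⟨m, ⟨hm1, hm2⟩, h1, h2⟩
    refine ⟨b - m, ?_⟩
    rw [fEntry_eq_iff b c d (b - m) j (ℓ+1) (by omega) (by omega),
      show b - (b - m) = m by omega]
    constructor
    · rw [show c - (ℓ + 1) = c - ℓ - 1 by omega]; exact h1
    · rw [show c + 1 - (ℓ + 1) = c - ℓ by omega]; exact h2

theorem biUnion_Ico_eq {b : ℕ} (d : ℕ → ℕ → ℕ) {n : ℕ} (hn : 0 < n) :
    (Finset.Icc 1 b).biUnion (fun m => Finset.Ico (gf d m (n - 1)) (gf d m n)) =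
    (Finset.Icc 1 b).biUnion
      (fun m => Finset.Ico (max (gf d (m - 1) n) (gf d m (n - 1))) (gf d m n)) := by
  apply Finset.Subset.antisymm
  · intro j hj
    simp only [Finset.mem_biUnion, Finset.mem_Icc, Finset.mem_Ico] at hj ⊢
    obtain ⟨m, ⟨hm1, hm2⟩, h1, h2⟩ := hj
    classical
    have hEx : ∃ k, j < gf d k n := ⟨m, h2⟩
    set m₀ := Nat.find hEx with hm₀
    have hfind : j < gf d m₀ n := Nat.find_spec hEx
    have hle : m₀ ≤ m := Nat.find_min' hEx h2
    have hm₀pos : 0 < m₀ := by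
      rcases Nat.eq_zero_or_pos m₀ with h0 | h
      · rw [h0] at hfind; simp at hfind
      · exact h
    have hprev : ¬ j < gf d (m₀ - 1) n := Nat.find_min hEx (by omega)
    refine ⟨m₀, ⟨by omega, by omega⟩, ?_, hfind⟩
    rw [max_le_iff]
    exact ⟨by omega, le_trans (gf_mono_left d hle (n-1)) h1⟩
  · intro j hj
    simp only [Finset.mem_biUnion, Finset.mem_Icc, Finset.mem_Ico] at hj ⊢
    obtain ⟨m, hm, h1, h2⟩ := hj
    exact ⟨m, hm, le_trans (le_max_right _ _) h1, h2⟩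

theorem biUnion_Ico_card {b : ℕ} (d : ℕ → ℕ → ℕ) (n : ℕ) :
    ((Finset.Icc 1 b).biUnion
      (fun m => Finset.Ico (max (gf d (m - 1) n) (gf d m (n - 1))) (gf d m n))).card
    = ∑ m ∈ Finset.Icc 1 b, (gf d m n - max (gf d (m - 1) n) (gf d m (n - 1))) := by
  rw [Finset.card_biUnion]
  · apply Finset.sum_congr rfl
    intro m _
    rw [Nat.card_Ico]
  · intro x hx y hy hxy
    simp only [Finset.mem_coe, Finset.mem_Icc] at hx hy
    rw [Function.onFun, Finset.disjoint_left]
    intro j hj1 hj2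
    simp only [Finset.mem_Ico, max_le_iff] at hj1 hj2
    rcases lt_or_gt_of_ne hxy with h | h
    · have : gf d x n ≤ gf d (y - 1) n := gf_mono_left d (by omega) n
      omega
    · have : gf d y n ≤ gf d (x - 1) n := gf_mono_left d (by omega) n
      omega

theorem gf_term (d : ℕ → ℕ → ℕ) {m n : ℕ} (hm : 0 < m) (hn : 0 < n) :
    gf d m n - max (gf d (m - 1) n) (gf d m (n - 1)) = d (m - 1) (n - 1) := by
  have := gf_rec d (m - 1) (n - 1)
  rw [show m - 1 + 1 = m by omega, show n - 1 + 1 = n by omega] at this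
  omega

theorem sum_cCol_eq {b c : ℕ} (w : Fin b × Fin c → ℕ) :
    ∑ ℓ ∈ Finset.range c, (PPofW b c (matExt w)).cCol (ℓ + 1)
      = ∑ p : Fin b × Fin c, w p := by
  set d := matExt w with hd
  have step1 : ∑ ℓ ∈ Finset.range c, (PPofW b c d).cCol (ℓ + 1)
      = ∑ n ∈ Finset.Icc 1 c, ∑ m ∈ Finset.Icc 1 b, d (m - 1) (n - 1) := by
    refine Finset.sum_nbij' (fun ℓ => c - ℓ) (fun n => c - n)
      (by intro ℓ hl; simp only [Finset.mem_range] at hl; simp only [Finset.mem_Icc]; omega)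
      (by intro n hn; simp only [Finset.mem_Icc] at hn; simp only [Finset.mem_range]; omega)
      (by intro ℓ hl; simp only [Finset.mem_range] at hl; omega)
      (by intro n hn; simp only [Finset.mem_Icc] at hn; omega)
      ?_
    intro ℓ hl
    simp only [Finset.mem_range] at hl
    rw [cCol_PPofW d hl, biUnion_Ico_eq d (n := c - ℓ) (by omega), biUnion_Ico_card]
    apply Finset.sum_congr rfl
    intro m hm
    simp only [Finset.mem_Icc] at hm
    rw [gf_term d (m := m) (n := c - ℓ) (by omega) (by omega)]
  rw [step1, Finset.sum_comm]
  have step2 : ∀ m ∈ Finset.Icc 1 b, ∑ n ∈ Finset.Icc 1 c, d (m - 1) (n - 1)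
      = ∑ j ∈ Finset.range c, d (m - 1) j := by
    intro m _
    refine Finset.sum_nbij' (fun n => n - 1) (fun j => j + 1)
      (by intro n hn; simp only [Finset.mem_Icc] at hn; simp only [Finset.mem_range]; omega)
      (by intro j hj; simp only [Finset.mem_range] at hj; simp only [Finset.mem_Icc]; omega)
      (by intro n hn; simp only [Finset.mem_Icc] at hn; omega)
      (by intro j _; omega)
      ?_
    intro n _
    rfl
  rw [Finset.sum_congr rfl step2]
  have step3 : ∑ m ∈ Finset.Icc 1 b, ∑ j ∈ Finset.range c, d (m - 1) j
      = ∑ i ∈ Finset.range b, ∑ j ∈ Finset.range c, d i j := by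
    refine Finset.sum_nbij' (fun m => m - 1) (fun i => i + 1)
      (by intro n hn; simp only [Finset.mem_Icc] at hn; simp only [Finset.mem_range]; omega)
      (by intro j hj; simp only [Finset.mem_range] at hj; simp only [Finset.mem_Icc]; omega)
      (by intro n hn; simp only [Finset.mem_Icc] at hn; omega)
      (by intro j _; omega)
      ?_
    intro n _
    rfl
  rw [step3]
  rw [Fintype.sum_prod_type]
  rw [← Fin.sum_univ_eq_sum_range (fun i => ∑ j ∈ Finset.range c, d i j) b]
  apply Finset.sum_congr rfl
  intro i _
  rw [← Fin.sum_univ_eq_sum_range (fun j => d i j) c]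
  apply Finset.sum_congr rfl
  intro j _
  show d i j = w (i, j)
  rw [hd]
  unfold matExt
  rw [dif_pos ⟨i.isLt, j.isLt⟩]

theorem condA_bound {b c : ℕ} {μ : YoungDiagram} (hb : 0 < b) (hc : 0 < c)
    {w : Fin b × Fin c → ℕ} (hw : condA b c μ w) : ∀ p, w p ≤ μ.rowLen 0 := by
  intro p
  have h1 : w p ≤ gf (matExt w) (p.1 + 1) (p.2 + 1) := by
    rw [gf_rec]
    have : matExt w (↑p.1) (↑p.2) = w p := by
      unfold matExt
      rw [dif_pos ⟨p.1.isLt, p.2.isLt⟩]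
    omega
  have h2 : gf (matExt w) (p.1 + 1) (p.2 + 1) ≤ gf (matExt w) b c :=
    le_trans (gf_mono_left (matExt w) p.1.isLt (p.2 + 1)) (gf_mono_right (matExt w) b p.2.isLt)
  have h3 : gf (matExt w) b c = μ.rowLen 0 := by
    have := hw ⟨0, hb⟩
    rw [← gf_eq_lastPassage (matExt w) hb hc] at this
    simpa using this
  omega

theorem condA_finite {b c : ℕ} (μ : YoungDiagram) (hb : 0 < b) (hc : 0 < c) :
    {w : Fin b × Fin c → ℕ | condA b c μ w}.Finite := by
  apply Set.Finite.subset (Set.Finite.pi (fun _ : Fin b × Fin c => Set.finite_Iic (μ.rowLen 0)))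
  intro w hw
  simp only [Set.mem_pi, Set.mem_univ, Set.mem_Iic, forall_true_left]
  intro p
  exact condA_bound hb hc hw p

theorem shape_finite (μ : YoungDiagram) (c : ℕ) :
    {π : PlanePartition | π.hasShape μ ∧ π.entriesLE c}.Finite := by
  rw [← Set.finite_coe_iff]
  let F : {π : PlanePartition | π.hasShape μ ∧ π.entriesLE c} →
      (μ.cells → Fin (c + 1)) := fun π => fun p =>
    ⟨π.1.entry p.1.1 p.1.2, Nat.lt_succ_of_le (π.2.2 p.1.1 p.1.2)⟩
  apply Finite.of_injective F
  intro π π' h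
  apply Subtype.ext
  apply PlanePartition.ext'
  funext i j
  by_cases hmem : (i, j) ∈ μ
  · have := congrFun h ⟨(i, j), hmem⟩
    simpa [F] using this
  · have h1 : π.1.entry i j = 0 := by
      by_contra hne
      exact hmem ((π.2.1 i j).mp (by omega))
    have h2 : π'.1.entry i j = 0 := by
      by_contra hne
      exact hmem ((π'.2.1 i j).mp (by omega))
    rw [h1, h2]

theorem geomWeight_eq (q : ℝ) (b c : ℕ) (w : Fin b × Fin c → ℕ) :
    geomWeight q b c w = (1 - q) ^ (b * c) * q ^ (∑ p : Fin b × Fin c, w p) := by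
  unfold geomWeight
  rw [Finset.prod_mul_distrib, Finset.prod_const, Finset.prod_pow_eq_pow_sum]
  congr 1
  rw [Finset.card_univ, Fintype.card_prod, Fintype.card_fin, Fintype.card_fin]
/-- Corner growth model and the `g`-measure: for i.i.d. Geom(q) entries
`w : Fin b × Fin c → ℕ` and last passage times `G(m,n)`, for every partition
`λ = (λ_1 ≥ ⋯ ≥ λ_b ≥ 0)` (realized as the row lengths of a Young diagram `μ` with at
most `b` rows), `P(G(b,c) = λ_1, …, G(1,c) = λ_b) = (1−q)^{bc} g_λ(q,…,q)`.
Here `G(b−k, c)` is the last passage time from `(0,0)` to `(b−1−k, c−1)` (0-indexed). -/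
theorem cornerGrowth_gMeasure (q : ℝ) (hq : q ∈ Set.Ioo (0 : ℝ) 1) (b c : ℕ)
    (hb : 0 < b) (hc : 0 < c) (μ : YoungDiagram) (hμ : μ.colLen 0 ≤ b) :
    ∑' w : {w : Fin b × Fin c → ℕ //
        ∀ k : Fin b,
          lastPassage (matExt w) (0, 0) (b - 1 - (k : ℕ), c - 1) = μ.rowLen k},
      geomWeight q b c w.1
    = (1 - q) ^ (b * c) * grothG μ c (fun _ => q) := by
  classical
  have hA : {w : Fin b × Fin c → ℕ | condA b c μ w}.Finite := condA_finite μ hb hc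
  have hB := shape_finite μ c
  have e1 : (∑' w : {w : Fin b × Fin c → ℕ //
        ∀ k : Fin b,
          lastPassage (matExt w) (0, 0) (b - 1 - (k : ℕ), c - 1) = μ.rowLen k},
      geomWeight q b c w.1)
      = ∑ w ∈ hA.toFinset, geomWeight q b c w := by
    have h0 : (∑' w : {w : Fin b × Fin c → ℕ //
        ∀ k : Fin b,
          lastPassage (matExt w) (0, 0) (b - 1 - (k : ℕ), c - 1) = μ.rowLen k},
        geomWeight q b c w.1)
        = ∑' w : ↥{w : Fin b × Fin c → ℕ | condA b c μ w}, geomWeight q b c ↑w := rfl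
    rw [h0, tsum_subtype]
    rw [tsum_eq_sum (s := hA.toFinset)
      (fun w hw => Set.indicator_of_notMem (fun h => hw (hA.mem_toFinset.mpr h)) _)]
    exact Finset.sum_congr rfl (fun w hw => Set.indicator_of_mem (hA.mem_toFinset.mp hw) _)
  rw [e1]
  have e2 : grothG μ c (fun _ => q)
      = ∑ π ∈ hB.toFinset, q ^ (∑ ℓ ∈ Finset.range c, π.cCol (ℓ + 1)) := by
    unfold grothG
    rw [finsum_mem_eq_finite_toFinset_sum _ hB]
    exact Finset.sum_congr rfl (fun π _ => Finset.prod_pow_eq_pow_sum _ _ _)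
  rw [e2, Finset.mul_sum]
  refine Finset.sum_nbij' (fun w => PPofW b c (matExt w)) (fun π => wOf b c π) ?_ ?_ ?_ ?_ ?_
  · intro w hw
    rw [Set.Finite.mem_toFinset] at hw ⊢
    exact ⟨PPofW_hasShape hμ hb hc hw, PPofW_entriesLE b c _⟩
  · intro π hπ
    rw [Set.Finite.mem_toFinset] at hπ ⊢
    exact wOf_condA hμ hb hc hπ.1 hπ.2
  · intro w _
    exact wOf_PPofW w
  · intro π hπ
    rw [Set.Finite.mem_toFinset] at hπ
    exact PPofW_wOf hμ hπ.1 hπ.2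
  · intro w _
    rw [geomWeight_eq, ← sum_cCol_eq w]
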